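/- For all computably transparent partial multifunctions f,g on ℕ: f ≤_W g if and only if j_f ≤_r j_g. Moreover, for every computably transparent U, the operation j_U is monotone and preserves arbitrary intersections; conversely, for every monotone operation j : Ω → Ω preserving arbitrary intersections, U_j is computably transparent and j_{U_j} = j. Hence the Weihrauch degrees of partial multifunctions on ℕ are isomorphic to the r-degrees of monotone, intersection-preserving operations on Ω. -/

import Mathlib

namespace KleeneOracle

/-- `e ∗ x`: application of the `e`-th partial computable function on ℕ. -/
def ap (e x : ℕ) : Part ℕ :=
  Nat.Partrec.Code.eval (Denumerable.ofNat Nat.Partrec.Code e) x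

/-- `e ∗ A := {e ∗ a : a ∈ A}`. -/
def apSet (e : ℕ) (A : Set ℕ) : Set ℕ := {z | ∃ a ∈ A, z ∈ ap e a}

/-- A partial multifunction on ℕ. -/
abbrev Multifun := ℕ → Part (Set ℕ)

def Transparent (U : Multifun) : Prop :=
  ∃ u : ℕ, ∀ (e x : ℕ) (A : Set ℕ), A ∈ U x → (∀ y ∈ A, (ap e y).Dom) →
    ∃ c ∈ ap u e, ∃ d ∈ ap c x, ∃ B ∈ U d, B ⊆ apSet e A

def Inflationary (U : Multifun) : Prop :=
  ∃ η : ℕ, ∀ x : ℕ, ∃ c ∈ ap η x, ∃ B ∈ U c, B ⊆ {x}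

def mcomp (g f : Multifun) : Multifun := fun x =>
  ⟨∃ A ∈ f x, ∀ y ∈ A, (g y).Dom,
   fun _ => {z | ∃ A ∈ f x, ∃ y ∈ A, ∃ B ∈ g y, z ∈ B}⟩

def Idempotent (U : Multifun) : Prop :=
  ∃ μ : ℕ, ∀ (x : ℕ) (A : Set ℕ), A ∈ mcomp U U x →
    ∃ c ∈ ap μ x, ∃ B ∈ U c, B ⊆ A

def mRed (f g : Multifun) : Prop :=
  ∃ e : ℕ, ∀ (x : ℕ) (A : Set ℕ), A ∈ f x →
    ∃ c ∈ ap e x, ∃ B ∈ g c, B ⊆ A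

def wRed (f g : Multifun) : Prop :=
  ∃ em ep : ℕ, ∀ (x : ℕ) (A : Set ℕ), A ∈ f x →
    ∃ c ∈ ap em x, ∃ B ∈ g c, ∀ y ∈ B, ∃ z ∈ ap ep (Nat.pair x y), z ∈ A

def Weih (g : Multifun) : Multifun := fun w =>
  ⟨∃ c ∈ ap w.unpair.1 w.unpair.2.unpair.2, ∃ B ∈ g c,
     ∀ y ∈ B, (ap w.unpair.2.unpair.1 (Nat.pair w.unpair.2.unpair.2 y)).Dom,
   fun _ => {z | ∃ c ∈ ap w.unpair.1 w.unpair.2.unpair.2, ∃ B ∈ g c,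
     ∃ y ∈ B, z ∈ ap w.unpair.2.unpair.1 (Nat.pair w.unpair.2.unpair.2 y)}⟩

def idsq (g : Multifun) : Multifun := fun w =>
  if w.unpair.1 = 0 then Part.some {w.unpair.2}
  else if w.unpair.1 = 1 then g w.unpair.2
  else Part.none

def pWeih (g : Multifun) : Multifun := Weih (idsq g)

def pwRed (f g : Multifun) : Prop := wRed f (idsq g)

def Med (Q : Set ℕ) : Multifun := fun e =>
  ⟨∀ a ∈ Q, (ap e a).Dom, fun _ => apSet e Q⟩

def MedRed (P Q : Set ℕ) : Prop :=
  ∃ e : ℕ, (∀ a ∈ Q, (ap e a).Dom) ∧ apSet e Q ⊆ P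

def constMF (P : Set ℕ) : Multifun := fun _ => Part.some P

def imp (p q : Set ℕ) : Set ℕ := {e | ∀ x ∈ p, ∃ z ∈ ap e x, z ∈ q}

def OpMonotone (j : Set ℕ → Set ℕ) : Prop :=
  ∃ u : ℕ, ∀ p q : Set ℕ, ∀ a ∈ imp p q, ∃ c ∈ ap u a, c ∈ imp (j p) (j q)

def OpInflationary (j : Set ℕ → Set ℕ) : Prop :=
  ∃ e : ℕ, ∀ p : Set ℕ, e ∈ imp p (j p)

def OpIdempotent (j : Set ℕ → Set ℕ) : Prop :=
  ∃ e : ℕ, ∀ p : Set ℕ, e ∈ imp (j (j p)) (j p)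

def LawvereTierney (j : Set ℕ → Set ℕ) : Prop :=
  OpMonotone j ∧ OpInflationary j ∧ OpIdempotent j

def jU (U : Multifun) (p : Set ℕ) : Set ℕ := {x | ∃ A ∈ U x, A ⊆ p}

def SingleValued (U : Multifun) : Prop := ∀ x : ℕ, ∀ A ∈ U x, ∃ y : ℕ, A = {y}

def presInter (j : Set ℕ → Set ℕ) : Prop :=
  ∀ (ι : Type) [Nonempty ι] (p : ι → Set ℕ), j (⋂ i, p i) = ⋂ i, j (p i)

def presUnion (j : Set ℕ → Set ℕ) : Prop :=
  ∀ (ι : Type) (p : ι → Set ℕ), j (⋃ i, p i) = ⋃ i, j (p i)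

def Uop (j : Set ℕ → Set ℕ) : Multifun := fun x =>
  ⟨∃ p : Set ℕ, x ∈ j p, fun _ => ⋂₀ {p : Set ℕ | x ∈ j p}⟩

def mMorphism (e : ℕ) (f g : Multifun) : Prop :=
  ∀ (x : ℕ) (A : Set ℕ), A ∈ f x → ∃ c ∈ ap e x, ∃ B ∈ g c, B ⊆ A

def rMorphism (e : ℕ) (j k : Set ℕ → Set ℕ) : Prop :=
  ∀ p : Set ℕ, e ∈ imp (j p) (k p)

def rRed (j k : Set ℕ → Set ℕ) : Prop := ∃ e : ℕ, rMorphism e j k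


lemma ap_partrec : Partrec₂ ap :=
  Nat.Partrec.Code.eval_part.comp
    ((Computable.ofNat _).comp Computable.fst) Computable.snd

lemma exists_code_ap {F : ℕ →. ℕ} (hF : Partrec F) : ∃ e : ℕ, ∀ x, ap e x = F x := by
  obtain ⟨c, hc⟩ := Nat.Partrec.Code.exists_code.1 (Partrec.nat_iff.1 hF)
  exact ⟨Encodable.encode c, fun x => by simp [ap, hc]⟩

lemma exists_curry {F : ℕ →. ℕ} (hF : Partrec F) :
    ∃ u : ℕ, ∀ a : ℕ, ∃ c : ℕ, ap u a = Part.some c ∧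
      ∀ x, ap c x = F (Nat.pair a x) := by
  obtain ⟨cF, hcF⟩ := Nat.Partrec.Code.exists_code.1 (Partrec.nat_iff.1 hF)
  have hG : Computable fun a : ℕ => Encodable.encode (Nat.Partrec.Code.curry cF a) :=
    Computable.encode.comp
      (Nat.Partrec.Code.primrec₂_curry.to_comp.comp (Computable.const cF) Computable.id)
  obtain ⟨u, hu⟩ := exists_code_ap hG.partrec
  refine ⟨u, fun a => ⟨_, hu a, fun x => ?_⟩⟩
  simp [ap, Nat.Partrec.Code.eval_curry, hcF]

lemma jU_presInter (U : Multifun) : presInter (jU U) := by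
  intro ι _ p
  ext x
  simp only [jU, Set.mem_setOf_eq, Set.mem_iInter]
  constructor
  · rintro ⟨A, hA, hsub⟩
    exact fun i => ⟨A, hA, fun y hy => Set.mem_iInter.1 (hsub hy) i⟩
  · intro hx
    obtain ⟨i₀⟩ := ‹Nonempty ι›
    obtain ⟨A, hA, _⟩ := hx i₀
    refine ⟨A, hA, fun y hy => Set.mem_iInter.2 fun i => ?_⟩
    obtain ⟨A', hA', hsub'⟩ := hx i
    cases Part.mem_unique hA hA'
    exact hsub' hy

lemma jU_monotone {U : Multifun} (hU : Transparent U) : OpMonotone (jU U) := by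
  obtain ⟨u, hu⟩ := hU
  have hF : Partrec fun n : ℕ => (ap u n.unpair.1).bind fun c₀ => ap c₀ n.unpair.2 :=
    (ap_partrec.comp (Computable.const u)
      (Computable.fst.comp Computable.unpair)).bind
      (ap_partrec.comp Computable.snd
        ((Computable.snd.comp Computable.unpair).comp Computable.fst))
  obtain ⟨u', hu'⟩ := exists_curry hF
  refine ⟨u', fun p q a ha => ?_⟩
  obtain ⟨ca, hca, hval⟩ := hu' a
  refine ⟨ca, by rw [hca]; exact Part.mem_some ca, fun x hx => ?_⟩
  obtain ⟨A, hA, hsub⟩ := hx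
  have hdom : ∀ y ∈ A, (ap a y).Dom := fun y hy => by
    obtain ⟨z, hz, _⟩ := ha y (hsub hy); exact Part.dom_iff_mem.2 ⟨z, hz⟩
  obtain ⟨c₀, hc₀, d, hd, B, hB, hBsub⟩ := hu a x A hA hdom
  refine ⟨d, ?_, B, hB, fun z hz => ?_⟩
  · have h := hval x
    simp only [Nat.unpair_pair] at h
    rw [h]
    exact Part.mem_bind_iff.2 ⟨c₀, hc₀, hd⟩
  · obtain ⟨y, hy, hzy⟩ := hBsub hz
    obtain ⟨z', hz', hz'q⟩ := ha y (hsub hy)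
    cases Part.mem_unique hzy hz'
    exact hz'q

lemma uop_of_monotone {j : Set ℕ → Set ℕ} (hm : OpMonotone j) (hi : presInter j) :
    Transparent (Uop j) ∧ jU (Uop j) = j := by
  have key : ∀ x p₀, x ∈ j p₀ → x ∈ j (⋂₀ {p : Set ℕ | x ∈ j p}) := by
    intro x p₀ hp₀
    have hne : Nonempty (↥{p : Set ℕ | x ∈ j p}) := ⟨⟨p₀, hp₀⟩⟩
    have h := hi (↥{p : Set ℕ | x ∈ j p}) (fun s => (s : Set ℕ))
    rw [Set.sInter_eq_iInter, h]
    exact Set.mem_iInter.2 fun s => s.2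
  have mono : ∀ {A p : Set ℕ}, A ⊆ p → j A ⊆ j p := by
    intro A p hAp
    have h := hi Bool (fun b => if b then A else p)
    have h1 : (⋂ b : Bool, if (b : Bool) then A else p) = A := by
      ext y
      simp only [Set.mem_iInter, Bool.forall_bool, if_true, if_false]
      exact ⟨fun hh => hh.2, fun hh => ⟨hAp hh, hh⟩⟩
    intro x hx
    rw [← h1, h] at hx
    simpa using Set.mem_iInter.1 hx false
  obtain ⟨u, hu⟩ := hm
  constructor
  · refine ⟨u, fun e x A hA hdom => ?_⟩
    obtain ⟨hx, hAeq⟩ := hA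
    obtain ⟨p₀, hp₀⟩ := hx
    have hxA : x ∈ j A := hAeq ▸ key x p₀ hp₀
    have he : e ∈ imp A (apSet e A) := fun y hy =>
      ⟨(ap e y).get (hdom y hy), Part.get_mem _, y, hy, Part.get_mem _⟩
    obtain ⟨c, hc, himp⟩ := hu A (apSet e A) e he
    obtain ⟨d, hd, hdj⟩ := himp x hxA
    exact ⟨c, hc, d, hd, _, ⟨⟨_, hdj⟩, rfl⟩, Set.sInter_subset_of_mem hdj⟩
  · funext p
    ext x
    simp only [jU, Set.mem_setOf_eq]
    constructor
    · rintro ⟨A, ⟨⟨p₀, hp₀⟩, rfl⟩, hsub⟩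
      exact mono hsub (key x p₀ hp₀)
    · intro hx
      exact ⟨_, ⟨⟨p, hx⟩, rfl⟩, Set.sInter_subset_of_mem hx⟩

lemma wRed_iff_rRed {f g : Multifun} (hg : Transparent g) :
    wRed f g ↔ rRed (jU f) (jU g) := by
  constructor
  · rintro ⟨em, ep, hw⟩
    obtain ⟨ug, hug⟩ := hg
    have hF0 : Partrec fun n : ℕ => ap ep n :=
      ap_partrec.comp (Computable.const ep) Computable.id
    obtain ⟨u₀, hu₀⟩ := exists_curry hF0
    have hFE : Partrec fun x : ℕ => (ap em x).bind fun c =>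
        (ap u₀ x).bind fun e' => (ap ug e').bind fun c₂ => ap c₂ c :=
      (ap_partrec.comp (Computable.const em) Computable.id).bind <|
        (ap_partrec.comp (Computable.const u₀) Computable.fst).bind <|
          (ap_partrec.comp (Computable.const ug) Computable.snd).bind <|
            ap_partrec.comp Computable.snd
              ((Computable.snd.comp Computable.fst).comp Computable.fst)
    obtain ⟨E, hE⟩ := exists_code_ap hFE
    refine ⟨E, fun p x hx => ?_⟩
    obtain ⟨A, hA, hsub⟩ := hx
    obtain ⟨c, hc, B, hB, hBA⟩ := hw x A hA
    obtain ⟨e', he'eq, he'val⟩ := hu₀ x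
    have hdom : ∀ y ∈ B, (ap e' y).Dom := fun y hy => by
      rw [he'val]
      obtain ⟨z, hz, _⟩ := hBA y hy
      exact Part.dom_iff_mem.2 ⟨z, hz⟩
    obtain ⟨c₂, hc₂, d, hd, B', hB', hB'sub⟩ := hug e' c B hB hdom
    refine ⟨d, ?_, B', hB', fun z hz => ?_⟩
    · rw [hE]
      exact Part.mem_bind_iff.2 ⟨c, hc, Part.mem_bind_iff.2
        ⟨e', by rw [he'eq]; exact Part.mem_some _,
          Part.mem_bind_iff.2 ⟨c₂, hc₂, hd⟩⟩⟩
    · obtain ⟨y, hy, hzy⟩ := hB'sub hz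
      rw [he'val] at hzy
      obtain ⟨z', hz', hz'A⟩ := hBA y hy
      cases Part.mem_unique hzy hz'
      exact hsub hz'A
  · rintro ⟨e, he⟩
    obtain ⟨ep, hep⟩ := exists_code_ap
      ((Computable.snd.comp Computable.unpair).partrec)
    refine ⟨e, ep, fun x A hA => ?_⟩
    have hx : x ∈ jU f A := ⟨A, hA, Set.Subset.rfl⟩
    obtain ⟨z, hz, B, hB, hBsub⟩ := he A x hx
    refine ⟨z, hz, B, hB, fun y hy => ⟨y, ?_, hBsub hy⟩⟩
    rw [hep]
    simp

/-- for computably transparent `f, g`: `f ≤_W g ↔ j_f ≤_r j_g`;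
for computably transparent `U`, `j_U` is monotone and intersection-preserving;
conversely for monotone intersection-preserving `j`, `U_j` is computably transparent
and `j_{U_j} = j`.  Hence the Weihrauch degrees are isomorphic to the r-degrees of
monotone intersection-preserving operations on Ω. -/
theorem weihrauch_rdeg_isomorphism :
    (∀ f g : Multifun, Transparent f → Transparent g →
      (wRed f g ↔ rRed (jU f) (jU g))) ∧
    (∀ U : Multifun, Transparent U → OpMonotone (jU U) ∧ presInter (jU U)) ∧
    (∀ j : Set ℕ → Set ℕ, OpMonotone j → presInter j →
      Transparent (Uop j) ∧ jU (Uop j) = j) := by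
  exact ⟨fun f g _ hg => wRed_iff_rRed hg,
    fun U hU => ⟨jU_monotone hU, jU_presInter U⟩,
    fun j hm hi => uop_of_monotone hm hi⟩


end KleeneOracle
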